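/- (Accelerated gradient and skew-symmetric splitting method.) Let F : ℝ^n → ℝ be differentiable with F ∈ S_{μ, L_F}, μ > 0, let N be a real n×n skew-symmetric matrix and B a real n×n matrix with N = B^sym − 2B, B^sym = B + Bᵀ, L_{B^sym} = ‖B^sym‖, and let x* satisfy ∇F(x*) + N x* = 0. Suppose 0 < α ≤ min{μ/(2L_{B^sym}), √(μ/(2L_F))} and the sequences satisfy (x̂_{k+1} − x_k)/α = y_k − x̂_{k+1}, (y_{k+1} − y_k)/α = x̂_{k+1} − y_{k+1} − (1/μ)(∇F(x̂_{k+1}) + B^sym y_k − 2B y_{k+1}), and (x_{k+1} − x_k)/α = y_{k+1} − (1/2)(x_{k+1} + x̂_{k+1}). Then, with E^{αB}(x,y) = D_F(x,x*) + (1/2)‖y − x*‖²_{μI − αB^sym} and E^{αB}_k = E^{αB}(x_k, y_k), one has E^{αB}_{k+1} ≤ (1 + α/2)^{−1} E^{αB}_k for every k, and ‖x_k − x*‖² ≤ (2/μ)(1 + α/2)^{−k} E^{αB}_0. -/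

import Mathlib

open Matrix

/-- The spectral norm (ℓ²-operator norm) of a real square matrix. -/
noncomputable def specNorm {n : ℕ} (M : Matrix (Fin n) (Fin n) ℝ) : ℝ :=
  ‖Matrix.toEuclideanCLM (𝕜 := ℝ) M‖

/-- The continuous linear functional `v ↦ ⟨z, v⟩` on `ℝⁿ`. -/
noncomputable def dpCLM {m : ℕ} (z : Fin m → ℝ) : (Fin m → ℝ) →L[ℝ] ℝ :=
  LinearMap.toContinuousLinearMap
    { toFun := fun v => z ⬝ᵥ v
      map_add' := fun a b => by simp [dotProduct_add]
      map_smul' := fun c a => by simp [dotProduct_smul] }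

lemma dp_self_nonneg {n : ℕ} (v : Fin n → ℝ) : 0 ≤ v ⬝ᵥ v :=
  Finset.sum_nonneg fun i _ => mul_self_nonneg (v i)

lemma symm_dot {n : ℕ} (B : Matrix (Fin n) (Fin n) ℝ) (a b : Fin n → ℝ) :
    a ⬝ᵥ (B + Bᵀ) *ᵥ b = b ⬝ᵥ (B + Bᵀ) *ᵥ a := by
  have hsym : (B + Bᵀ)ᵀ = B + Bᵀ := by
    rw [transpose_add, transpose_transpose, add_comm]
  rw [Matrix.dotProduct_mulVec, ← Matrix.mulVec_transpose, hsym, dotProduct_comm]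

lemma two_dot {n : ℕ} (B : Matrix (Fin n) (Fin n) ℝ) (a : Fin n → ℝ) :
    a ⬝ᵥ (B + Bᵀ) *ᵥ a = 2 * (a ⬝ᵥ B *ᵥ a) := by
  rw [Matrix.add_mulVec, dotProduct_add]
  have : a ⬝ᵥ Bᵀ *ᵥ a = a ⬝ᵥ B *ᵥ a := by
    rw [Matrix.dotProduct_mulVec, ← Matrix.mulVec_transpose, transpose_transpose,
      dotProduct_comm]
  rw [this]; ring

lemma quad_expand {n : ℕ} (μ α : ℝ) (M : Matrix (Fin n) (Fin n) ℝ) (z : Fin n → ℝ) :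
    z ⬝ᵥ ((μ • (1 : Matrix (Fin n) (Fin n) ℝ) - α • M) *ᵥ z)
      = μ * (z ⬝ᵥ z) - α * (z ⬝ᵥ M *ᵥ z) := by
  rw [Matrix.sub_mulVec, Matrix.smul_mulVec, Matrix.smul_mulVec,
    Matrix.one_mulVec, dotProduct_sub, dotProduct_smul,
    dotProduct_smul, smul_eq_mul, smul_eq_mul]

lemma spec_bound {n : ℕ} (M : Matrix (Fin n) (Fin n) ℝ) (v : Fin n → ℝ) :
    |v ⬝ᵥ M.mulVec v| ≤ specNorm M * (v ⬝ᵥ v) := by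
  set e : EuclideanSpace ℝ (Fin n) := (WithLp.equiv 2 _).symm v with he
  have h1 : v ⬝ᵥ M.mulVec v = inner ℝ e (Matrix.toEuclideanCLM (𝕜 := ℝ) M e) := by
    rw [EuclideanSpace.inner_eq_star_dotProduct]
    simp [he, Matrix.toLin'_apply]
    exact dotProduct_comm _ _
  have h2 : v ⬝ᵥ v = ‖e‖^2 := by
    rw [← real_inner_self_eq_norm_sq, EuclideanSpace.inner_eq_star_dotProduct]
    rfl
  rw [h1, h2]
  calc |inner ℝ e (Matrix.toEuclideanCLM (𝕜 := ℝ) M e)|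
      ≤ ‖e‖ * ‖Matrix.toEuclideanCLM (𝕜 := ℝ) M e‖ := abs_real_inner_le_norm _ _
    _ ≤ ‖e‖ * (specNorm M * ‖e‖) := by
        gcongr
        exact (Matrix.toEuclideanCLM (𝕜 := ℝ) M).le_opNorm e
    _ = specNorm M * ‖e‖^2 := by ring

set_option maxHeartbeats 1000000 in
lemma onestep {n : ℕ} (μ LF α : ℝ) (hμ : 0 < μ)
    (F : (Fin n → ℝ) → ℝ) (gradF : (Fin n → ℝ) → (Fin n → ℝ))
    (hlower : ∀ x y : Fin n → ℝ,
      μ / 2 * ((x - y) ⬝ᵥ (x - y)) ≤ F x - F y - gradF y ⬝ᵥ (x - y))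
    (hupper : ∀ x y : Fin n → ℝ,
      F x - F y - gradF y ⬝ᵥ (x - y) ≤ LF / 2 * ((x - y) ⬝ᵥ (x - y)))
    (B : Matrix (Fin n) (Fin n) ℝ) (xs : Fin n → ℝ)
    (hxs' : gradF xs = (2 : ℝ) • (B *ᵥ xs) - (B + Bᵀ) *ᵥ xs)
    (hα0 : 0 < α)
    (hαB : α * specNorm (B + Bᵀ) ≤ μ / 2)
    (hαL : LF * α ^ 2 ≤ μ / 2)
    (x xp y yp xh : Fin n → ℝ)
    (h1 : xh - x = α • (y - xh))
    (h2 : yp - y = α • (xh - yp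
        - (1 / μ) • (gradF xh + (B + Bᵀ) *ᵥ y - (2 : ℝ) • (B *ᵥ yp))))
    (h3 : xp - x = α • (yp - (1 / 2 : ℝ) • (xp + xh))) :
    (1 + α / 2) * ((F xp - F xs - gradF xs ⬝ᵥ (xp - xs))
        + 1 / 2 * (μ * ((yp - xs) ⬝ᵥ (yp - xs))
            - α * ((yp - xs) ⬝ᵥ ((B + Bᵀ) *ᵥ (yp - xs)))))
      ≤ (F x - F xs - gradF xs ⬝ᵥ (x - xs))
        + 1 / 2 * (μ * ((y - xs) ⬝ᵥ (y - xs))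
            - α * ((y - xs) ⬝ᵥ ((B + Bᵀ) *ᵥ (y - xs)))) := by
  -- vector identities
  have K1 : μ • ((yp - xs) - (y - xs)) = (α * μ) • ((xh - xs) - (yp - xs))
      - α • ((gradF xh - gradF xs) + (B + Bᵀ) *ᵥ (y - xs)
          - (2 : ℝ) • (B *ᵥ (yp - xs))) := by
    funext i
    have h2i := congrFun h2 i
    have hsi := congrFun hxs' i
    simp only [Matrix.mulVec_sub, Pi.sub_apply, Pi.add_apply, Pi.smul_apply,
      smul_eq_mul] at h2i hsi ⊢
    field_simp at h2i
    linear_combination h2i - α * hsi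
  have K3 : (1 + α / 2) • (xp - xh) = α • (yp - y) := by
    funext i
    have h3i := congrFun h3 i
    have h1i := congrFun h1 i
    simp only [Pi.sub_apply, Pi.add_apply, Pi.smul_apply, smul_eq_mul] at h3i h1i ⊢
    linear_combination h3i - h1i
  have K3s : (1 + α / 2) ^ 2 * ((xp - xh) ⬝ᵥ (xp - xh))
      = α ^ 2 * ((yp - y) ⬝ᵥ (yp - y)) := by
    have h := congrArg (fun z => z ⬝ᵥ z) K3
    simp only [smul_dotProduct, dotProduct_smul, smul_eq_mul] at h
    linear_combination h
  have hK1v := congrArg (fun z => (yp - xs) ⬝ᵥ z) K1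
  have hK2g := congrArg (fun z => (gradF xh - gradF xs) ⬝ᵥ z) h3
  have hT2 := two_dot B (yp - xs)
  simp only [dotProduct_sub, sub_dotProduct, dotProduct_add, add_dotProduct, dotProduct_smul, smul_dotProduct, Matrix.mulVec_sub, smul_eq_mul, dotProduct_comm x xp, dotProduct_comm xh xp, dotProduct_comm xh x, dotProduct_comm yp xp, dotProduct_comm yp x, dotProduct_comm yp xh, dotProduct_comm y xp, dotProduct_comm y x, dotProduct_comm y xh, dotProduct_comm y yp, dotProduct_comm xs xp, dotProduct_comm xs x, dotProduct_comm xs xh, dotProduct_comm xs yp, dotProduct_comm xs y, dotProduct_comm xp (gradF xh), dotProduct_comm xp (gradF xs), dotProduct_comm x (gradF xh), dotProduct_comm x (gradF xs), dotProduct_comm xh (gradF xh), dotProduct_comm xh (gradF xs), dotProduct_comm yp (gradF xh), dotProduct_comm yp (gradF xs), dotProduct_comm y (gradF xh), dotProduct_comm y (gradF xs), dotProduct_comm xs (gradF xh), dotProduct_comm xs (gradF xs), symm_dot B xs yp, symm_dot B xs y, symm_dot B y yp] at hK1v hK2g hT2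
  -- master identity
  have key : (1 + α / 2) * ((F xp - F xs - gradF xs ⬝ᵥ (xp - xs))
        + 1 / 2 * (μ * ((yp - xs) ⬝ᵥ (yp - xs))
            - α * ((yp - xs) ⬝ᵥ ((B + Bᵀ) *ᵥ (yp - xs)))))
      - ((F x - F xs - gradF xs ⬝ᵥ (x - xs))
        + 1 / 2 * (μ * ((y - xs) ⬝ᵥ (y - xs))
            - α * ((y - xs) ⬝ᵥ ((B + Bᵀ) *ᵥ (y - xs)))))
      = (1 + α / 2) * (F xp - F xh - gradF xh ⬝ᵥ (xp - xh))
        - (F x - F xh - gradF xh ⬝ᵥ (x - xh))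
        - (α / 2) * (F xh - F xs - gradF xs ⬝ᵥ (xh - xs))
        - α * (F xs - F xh - gradF xh ⬝ᵥ (xs - xh))
        + α * μ * ((xh - xs) ⬝ᵥ (yp - xs) - (yp - xs) ⬝ᵥ (yp - xs))
        - (1 / 2) * (μ * ((yp - y) ⬝ᵥ (yp - y))
            - α * ((yp - y) ⬝ᵥ ((B + Bᵀ) *ᵥ (yp - y))))
        + (α / 4) * (μ * ((yp - xs) ⬝ᵥ (yp - xs))
            - α * ((yp - xs) ⬝ᵥ ((B + Bᵀ) *ᵥ (yp - xs)))) := by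
    simp only [dotProduct_sub, sub_dotProduct, dotProduct_add, add_dotProduct, dotProduct_smul, smul_dotProduct, Matrix.mulVec_sub, smul_eq_mul, dotProduct_comm x xp, dotProduct_comm xh xp, dotProduct_comm xh x, dotProduct_comm yp xp, dotProduct_comm yp x, dotProduct_comm yp xh, dotProduct_comm y xp, dotProduct_comm y x, dotProduct_comm y xh, dotProduct_comm y yp, dotProduct_comm xs xp, dotProduct_comm xs x, dotProduct_comm xs xh, dotProduct_comm xs yp, dotProduct_comm xs y, dotProduct_comm xp (gradF xh), dotProduct_comm xp (gradF xs), dotProduct_comm x (gradF xh), dotProduct_comm x (gradF xs), dotProduct_comm xh (gradF xh), dotProduct_comm xh (gradF xs), dotProduct_comm yp (gradF xh), dotProduct_comm yp (gradF xs), dotProduct_comm y (gradF xh), dotProduct_comm y (gradF xs), dotProduct_comm xs (gradF xh), dotProduct_comm xs (gradF xs), symm_dot B xs yp, symm_dot B xs y, symm_dot B y yp]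
    linear_combination hK1v + hK2g - α * hT2
  clear hK1v hK2g hT2 K1 K3 h1 h2 h3 hxs'
  -- bounds
  set LB := specNorm (B + Bᵀ) with hLB
  have hLBpos : 0 ≤ LB := norm_nonneg _
  have hSpos : 0 ≤ (yp - y) ⬝ᵥ (yp - y) := dp_self_nonneg _
  have hVpos : 0 ≤ (yp - xs) ⬝ᵥ (yp - xs) := dp_self_nonneg _
  have hDDpos : 0 ≤ (xp - xh) ⬝ᵥ (xp - xh) := dp_self_nonneg _
  have bDP_ub := hupper xp xh
  have bDP_lb := hlower xp xh
  have bDX := hlower x xh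
  have hDXpos : 0 ≤ F x - F xh - gradF xh ⬝ᵥ (x - xh) := by
    refine le_trans ?_ bDX
    have := dp_self_nonneg (x - xh); positivity
  have bDH := hlower xh xs
  have hDHpos : 0 ≤ F xh - F xs - gradF xs ⬝ᵥ (xh - xs) := by
    refine le_trans ?_ bDH
    have := dp_self_nonneg (xh - xs); positivity
  have bDS := hlower xs xh
  have eU : (xs - xh) ⬝ᵥ (xs - xh) = (xh - xs) ⬝ᵥ (xh - xs) := by
    have : xs - xh = -(xh - xs) := by abel
    rw [this, neg_dotProduct, dotProduct_neg, neg_neg]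
  have eUV : 0 ≤ (xh - xs) ⬝ᵥ (xh - xs) - 2 * ((xh - xs) ⬝ᵥ (yp - xs))
      + (yp - xs) ⬝ᵥ (yp - xs) := by
    have h := dp_self_nonneg ((xh - xs) - (yp - xs))
    have e : ((xh - xs) - (yp - xs)) ⬝ᵥ ((xh - xs) - (yp - xs))
        = (xh - xs) ⬝ᵥ (xh - xs) - 2 * ((xh - xs) ⬝ᵥ (yp - xs))
          + (yp - xs) ⬝ᵥ (yp - xs) := by
      simp only [dotProduct_sub, sub_dotProduct, dotProduct_add, add_dotProduct, dotProduct_smul, smul_dotProduct, Matrix.mulVec_sub, smul_eq_mul, dotProduct_comm x xp, dotProduct_comm xh xp, dotProduct_comm xh x, dotProduct_comm yp xp, dotProduct_comm yp x, dotProduct_comm yp xh, dotProduct_comm y xp, dotProduct_comm y x, dotProduct_comm y xh, dotProduct_comm y yp, dotProduct_comm xs xp, dotProduct_comm xs x, dotProduct_comm xs xh, dotProduct_comm xs yp, dotProduct_comm xs y, dotProduct_comm xp (gradF xh), dotProduct_comm xp (gradF xs), dotProduct_comm x (gradF xh), dotProduct_comm x (gradF xs), dotProduct_comm xh (gradF xh),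 dotProduct_comm xh (gradF xs), dotProduct_comm yp (gradF xh), dotProduct_comm yp (gradF xs), dotProduct_comm y (gradF xh), dotProduct_comm y (gradF xs), dotProduct_comm xs (gradF xh), dotProduct_comm xs (gradF xs), symm_dot B xs yp, symm_dot B xs y, symm_dot B y yp]
      ring
    rw [e] at h
    exact h
  have specS := spec_bound (B + Bᵀ) (yp - y)
  have specV := spec_bound (B + Bᵀ) (yp - xs)
  rw [← hLB] at specS specV
  -- t1 : (1+α/2) * DP ≤ μ/4 * S
  have hDPpos : 0 ≤ F xp - F xh - gradF xh ⬝ᵥ (xp - xh) := by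
    refine le_trans ?_ bDP_lb; positivity
  have t1 : (1 + α / 2) * (F xp - F xh - gradF xh ⬝ᵥ (xp - xh))
      ≤ μ / 4 * ((yp - y) ⬝ᵥ (yp - y)) := by
    have e4 : (1 + α / 2) * (F xp - F xh - gradF xh ⬝ᵥ (xp - xh))
        ≤ (1 + α / 2) ^ 2 * (F xp - F xh - gradF xh ⬝ᵥ (xp - xh)) := by
      nlinarith [mul_nonneg hα0.le hDPpos, mul_nonneg (mul_nonneg hα0.le hα0.le) hDPpos]
    have e1 : (1 + α / 2) ^ 2 * (F xp - F xh - gradF xh ⬝ᵥ (xp - xh))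
        ≤ (1 + α / 2) ^ 2 * (LF / 2 * ((xp - xh) ⬝ᵥ (xp - xh))) := by
      have : (0:ℝ) ≤ (1 + α / 2) ^ 2 := sq_nonneg _
      exact mul_le_mul_of_nonneg_left bDP_ub this
    have e2 : (1 + α / 2) ^ 2 * (LF / 2 * ((xp - xh) ⬝ᵥ (xp - xh)))
        = LF / 2 * (α ^ 2 * ((yp - y) ⬝ᵥ (yp - y))) := by
      linear_combination (LF / 2) * K3s
    have e3 : LF / 2 * (α ^ 2 * ((yp - y) ⬝ᵥ (yp - y)))
        ≤ μ / 4 * ((yp - y) ⬝ᵥ (yp - y)) := by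
      nlinarith [mul_nonneg hSpos (sub_nonneg.2 hαL)]
    linarith
  -- t2 : α * SBS ≤ μ/2 * S
  have t2 : α * ((yp - y) ⬝ᵥ ((B + Bᵀ) *ᵥ (yp - y))) ≤ μ / 2 * ((yp - y) ⬝ᵥ (yp - y)) := by
    have a1 : (yp - y) ⬝ᵥ ((B + Bᵀ) *ᵥ (yp - y)) ≤ LB * ((yp - y) ⬝ᵥ (yp - y)) :=
      le_trans (le_abs_self _) specS
    have a2 := mul_le_mul_of_nonneg_left a1 hα0.le
    have a3 := mul_le_mul_of_nonneg_right hαB hSpos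
    nlinarith [a2, a3]
  -- t3 : -(α^2 * VBSV) ≤ α * μ/2 * VV
  have t3 : -(α ^ 2 * ((yp - xs) ⬝ᵥ ((B + Bᵀ) *ᵥ (yp - xs))))
      ≤ α * (μ / 2) * ((yp - xs) ⬝ᵥ (yp - xs)) := by
    have a1 : -((yp - xs) ⬝ᵥ ((B + Bᵀ) *ᵥ (yp - xs))) ≤ LB * ((yp - xs) ⬝ᵥ (yp - xs)) :=
      le_trans (neg_le_abs _) specV
    have a2 := mul_le_mul_of_nonneg_left a1 (sq_nonneg α)
    have a3 := mul_le_mul_of_nonneg_right hαB hVpos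
    nlinarith [a2, a3, hα0.le]
  -- t4
  have t4 : -(α * (F xs - F xh - gradF xh ⬝ᵥ (xs - xh)))
      + α * μ * ((xh - xs) ⬝ᵥ (yp - xs) - (yp - xs) ⬝ᵥ (yp - xs))
      ≤ -(α * μ / 2) * ((yp - xs) ⬝ᵥ (yp - xs)) := by
    have a1 : μ / 2 * ((xh - xs) ⬝ᵥ (xh - xs)) ≤ F xs - F xh - gradF xh ⬝ᵥ (xs - xh) := by
      have := bDS; rw [eU] at this; exact this
    have a2 := mul_le_mul_of_nonneg_left a1 hα0.le
    have a3 := mul_le_mul_of_nonneg_left eUV (mul_nonneg hα0.le hμ.le)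
    nlinarith [a2, a3]
  have t5 : 0 ≤ α * (F xh - F xs - gradF xs ⬝ᵥ (xh - xs)) := mul_nonneg hα0.le hDHpos
  have hfin := mul_nonneg (mul_nonneg hα0.le hμ.le) hVpos
  linarith [key, t1, t2, t3, t4, t5, hDXpos, hfin]
/-- **Accelerated linear convergence of the explicit AGSS method.**
For `F ∈ S_{μ,L_F}` (`μ > 0`), `N = Bˢʸᵐ - 2B` skew-symmetric with `Bˢʸᵐ = B + Bᵀ`,
`∇F(x*) + Nx* = 0`, step `0 < α ≤ min{μ/(2‖Bˢʸᵐ‖), √(μ/(2L_F))}`, and the AGSS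
iteration, the modified Lyapunov function
`E(x,y) = D_F(x,x*) + ½‖y - x*‖²_{μI - αBˢʸᵐ}` satisfies
`E_{k+1} ≤ (1 + α/2)⁻¹E_k` and `‖x_k - x*‖² ≤ (2/μ)(1 + α/2)⁻ᵏ E_0`. -/
theorem agss_linear_convergence
    {n : ℕ} (μ LF α : ℝ) (hμ : 0 < μ)
    (F : (Fin n → ℝ) → ℝ) (gradF : (Fin n → ℝ) → (Fin n → ℝ))
    (hdiff : ∀ x, HasFDerivAt F (dpCLM (gradF x)) x)
    (hlower : ∀ x y : Fin n → ℝ,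
      μ / 2 * ((x - y) ⬝ᵥ (x - y)) ≤ F x - F y - gradF y ⬝ᵥ (x - y))
    (hupper : ∀ x y : Fin n → ℝ,
      F x - F y - gradF y ⬝ᵥ (x - y) ≤ LF / 2 * ((x - y) ⬝ᵥ (x - y)))
    (N B : Matrix (Fin n) (Fin n) ℝ)
    (hskew : Nᵀ = -N)
    (hNB : N = (B + Bᵀ) - (2 : ℝ) • B)
    (xs : Fin n → ℝ) (hxs : gradF xs + N.mulVec xs = 0)
    (hα0 : 0 < α)
    (hα1 : α ≤ min (μ / (2 * specNorm (B + Bᵀ))) (Real.sqrt (μ / (2 * LF))))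
    (x y xhat : ℕ → (Fin n → ℝ))
    (hstep1 : ∀ k, xhat (k + 1) - x k = α • (y k - xhat (k + 1)))
    (hstep2 : ∀ k, y (k + 1) - y k =
      α • (xhat (k + 1) - y (k + 1)
        - (1 / μ) • (gradF (xhat (k + 1)) + (B + Bᵀ).mulVec (y k)
          - (2 : ℝ) • B.mulVec (y (k + 1)))))
    (hstep3 : ∀ k, x (k + 1) - x k =
      α • (y (k + 1) - (1 / 2 : ℝ) • (x (k + 1) + xhat (k + 1)))) :
    (∀ k,
      (F (x (k + 1)) - F xs - gradF xs ⬝ᵥ (x (k + 1) - xs))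
          + (1 / 2) * ((y (k + 1) - xs) ⬝ᵥ
              ((μ • 1 - α • (B + Bᵀ)).mulVec (y (k + 1) - xs)))
        ≤ (1 + α / 2)⁻¹ *
          ((F (x k) - F xs - gradF xs ⬝ᵥ (x k - xs))
            + (1 / 2) * ((y k - xs) ⬝ᵥ
                ((μ • 1 - α • (B + Bᵀ)).mulVec (y k - xs))))) ∧
    (∀ k,
      (x k - xs) ⬝ᵥ (x k - xs)
        ≤ (2 / μ) * ((1 + α / 2)⁻¹) ^ k *
          ((F (x 0) - F xs - gradF xs ⬝ᵥ (x 0 - xs))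
            + (1 / 2) * ((y 0 - xs) ⬝ᵥ
                ((μ • 1 - α • (B + Bᵀ)).mulVec (y 0 - xs))))) := by
  have hxs' : gradF xs = (2 : ℝ) • (B *ᵥ xs) - (B + Bᵀ) *ᵥ xs := by
    have h := hxs
    rw [hNB] at h
    funext i
    have hi := congrFun h i
    simp only [Matrix.sub_mulVec, Matrix.smul_mulVec, Pi.add_apply, Pi.sub_apply,
      Pi.smul_apply, smul_eq_mul, Pi.zero_apply] at hi ⊢
    linarith
  have hLBpos : 0 ≤ specNorm (B + Bᵀ) := norm_nonneg _
  have hαB : α * specNorm (B + Bᵀ) ≤ μ / 2 := by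
    rcases eq_or_lt_of_le hLBpos with hz | hz
    · rw [← hz, mul_zero]; positivity
    · have h := (le_min_iff.mp hα1).1
      rw [le_div_iff₀ (by positivity)] at h
      linarith
  have hαL : LF * α ^ 2 ≤ μ / 2 := by
    have hs := (le_min_iff.mp hα1).2
    have ht : 0 < μ / (2 * LF) := by
      by_contra hc
      push_neg at hc
      have h0 : Real.sqrt (μ / (2 * LF)) = 0 := Real.sqrt_eq_zero_of_nonpos hc
      rw [h0] at hs
      linarith
    have hLF : 0 < LF := by
      rcases lt_trichotomy LF 0 with h | h | h
      · exfalso; have : μ / (2 * LF) < 0 := div_neg_of_pos_of_neg hμ (by linarith)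
        linarith
      · exfalso; rw [h, mul_zero, div_zero] at ht; exact lt_irrefl 0 ht
      · exact h
    have h2 : α ^ 2 ≤ μ / (2 * LF) := by
      have := pow_le_pow_left₀ hα0.le hs 2
      rwa [Real.sq_sqrt ht.le] at this
    rw [le_div_iff₀ (by positivity)] at h2
    linarith
  have hA : (0:ℝ) < 1 + α / 2 := by linarith
  set E : ℕ → ℝ := fun k => (F (x k) - F xs - gradF xs ⬝ᵥ (x k - xs))
      + 1 / 2 * (μ * ((y k - xs) ⬝ᵥ (y k - xs))
          - α * ((y k - xs) ⬝ᵥ ((B + Bᵀ) *ᵥ (y k - xs)))) with hE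
  have step : ∀ k, (1 + α / 2) * E (k + 1) ≤ E k := fun k =>
    onestep μ LF α hμ F gradF hlower hupper B xs hxs' hα0 hαB hαL
      (x k) (x (k + 1)) (y k) (y (k + 1)) (xhat (k + 1))
      (hstep1 k) (hstep2 k) (hstep3 k)
  have part1 : ∀ k, E (k + 1) ≤ (1 + α / 2)⁻¹ * E k := by
    intro k
    calc E (k + 1) = (1 + α / 2)⁻¹ * ((1 + α / 2) * E (k + 1)) :=
          (inv_mul_cancel_left₀ hA.ne' _).symm
      _ ≤ (1 + α / 2)⁻¹ * E k :=
          mul_le_mul_of_nonneg_left (step k) (by positivity)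
  have decay : ∀ k, E k ≤ ((1 + α / 2)⁻¹) ^ k * E 0 := by
    intro k
    induction k with
    | zero => simp
    | succ k ih =>
      calc E (k + 1) ≤ (1 + α / 2)⁻¹ * E k := part1 k
        _ ≤ (1 + α / 2)⁻¹ * (((1 + α / 2)⁻¹) ^ k * E 0) :=
            mul_le_mul_of_nonneg_left ih (by positivity)
        _ = ((1 + α / 2)⁻¹) ^ (k + 1) * E 0 := by ring
  have equad : ∀ z : Fin n → ℝ, z ⬝ᵥ ((μ • (1 : Matrix (Fin n) (Fin n) ℝ)
      - α • (B + Bᵀ)).mulVec z) = μ * (z ⬝ᵥ z) - α * (z ⬝ᵥ (B + Bᵀ) *ᵥ z) :=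
    fun z => quad_expand μ α (B + Bᵀ) z
  constructor
  · intro k
    rw [equad, equad]
    exact part1 k
  · intro k
    rw [equad]
    have hquad : 0 ≤ μ * ((y k - xs) ⬝ᵥ (y k - xs))
        - α * ((y k - xs) ⬝ᵥ ((B + Bᵀ) *ᵥ (y k - xs))) := by
      have hb := spec_bound (B + Bᵀ) (y k - xs)
      have hW : 0 ≤ (y k - xs) ⬝ᵥ (y k - xs) := dp_self_nonneg _
      have a1 : α * ((y k - xs) ⬝ᵥ ((B + Bᵀ) *ᵥ (y k - xs)))
          ≤ α * (specNorm (B + Bᵀ) * ((y k - xs) ⬝ᵥ (y k - xs))) :=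
        mul_le_mul_of_nonneg_left (le_trans (le_abs_self _) hb) hα0.le
      have a2 := mul_le_mul_of_nonneg_right hαB hW
      nlinarith [a1, a2]
    have hD : μ / 2 * ((x k - xs) ⬝ᵥ (x k - xs))
        ≤ F (x k) - F xs - gradF xs ⬝ᵥ (x k - xs) := hlower (x k) xs
    have hEk : μ / 2 * ((x k - xs) ⬝ᵥ (x k - xs)) ≤ E k := by
      rw [hE]; dsimp only; linarith
    have hfin : E k ≤ ((1 + α / 2)⁻¹) ^ k * E 0 := decay k
    have h2μ : (0:ℝ) < 2 / μ := by positivity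
    have : (x k - xs) ⬝ᵥ (x k - xs) ≤ (2 / μ) * E k := by
      calc (x k - xs) ⬝ᵥ (x k - xs)
          = (2 / μ) * (μ / 2 * ((x k - xs) ⬝ᵥ (x k - xs))) := by
            field_simp
        _ ≤ (2 / μ) * E k := mul_le_mul_of_nonneg_left hEk h2μ.le
    calc (x k - xs) ⬝ᵥ (x k - xs) ≤ (2 / μ) * E k := this
      _ ≤ (2 / μ) * (((1 + α / 2)⁻¹) ^ k * E 0) :=
          mul_le_mul_of_nonneg_left hfin h2μ.le
      _ = 2 / μ * ((1 + α / 2)⁻¹) ^ k * E 0 := by ring
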